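/- Let 0 < α < 2 and H > 0, let (X, 𝒳, μ) be a standard Lebesgue space, {ψ_c}_{c>0} a measurable nonsingular multiplicative flow on X, {g_c}_{c>0} a 1-semi-additive functional for the flow, and {b̃_c}_{c>0} a cocycle for the flow taking values in ℝ∖{0}. Let G : X × ℝ → ℝ be jointly measurable and j_c : X → ℝ be functions such that for every c > 0, j_c(x) = c^{-(H−1/α)} G(x, cu) − b̃_c(x) G(ψ_c(x), u + g_c(x)) for μ(dx)du-a.e. (x,u) ∈ X × ℝ. Then for all c1, c2 > 0, j_{c1c2}(x) = c2^{-(H−1/α)} j_{c1}(x) + b̃_{c1}(x) j_{c2}(ψ_{c1}(x)) for μ-a.e. x ∈ X. -/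
import Mathlib


open MeasureTheory

/-- Auxiliary: a.e. statement transfer along a map whose preimage preserves null sets. -/
lemma transfer_ae {Y : Type*} [MeasurableSpace Y] (ν : Measure Y) (T : Y → Y)
    (hT : ∀ s : Set Y, MeasurableSet s → ν s = 0 → ν (T ⁻¹' s) = 0)
    {P : Y → Prop} (h : ∀ᵐ y ∂ν, P y) : ∀ᵐ y ∂ν, P (T y) := by
  rw [ae_iff] at h ⊢
  have hsub : {y | ¬ P (T y)} ⊆ T ⁻¹' (toMeasurable ν {y | ¬ P y}) := fun y hy =>
    subset_toMeasurable ν _ hy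
  refine measure_mono_null hsub (hT _ (measurableSet_toMeasurable _ _) ?_)
  rwa [measure_toMeasurable]

/-- if for every `c > 0`,
`j_c(x) = c^{-(H−1/α)} G(x,cu) − b̃_c(x) G(ψ_c(x), u + g_c(x))` for
`μ(dx)du`-a.e. `(x,u)`, then for all `c1, c2 > 0`,
`j_{c1c2}(x) = c2^{-(H−1/α)} j_{c1}(x) + b̃_{c1}(x) j_{c2}(ψ_{c1}(x))` for μ-a.e. `x`,
i.e. `{j_c}` is an almost 2-semi-additive functional. -/
theorem stmt10 {X : Type*} [MeasurableSpace X] [StandardBorelSpace X]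
    (μ : Measure X) [SigmaFinite μ]
    (α H : ℝ) (hα0 : 0 < α) (hα2 : α < 2) (hH : 0 < H)
    (ψ : ℝ → X → X)
    (hψ_mul : ∀ c1 c2 : ℝ, 0 < c1 → 0 < c2 → ∀ x : X, ψ (c1 * c2) x = ψ c1 (ψ c2 x))
    (hψ_one : ∀ x : X, ψ 1 x = x)
    (hψ_meas : Measurable (fun p : ℝ × X => ψ p.1 p.2))
    (hψ_ns : ∀ c : ℝ, 0 < c → ∀ s : Set X, MeasurableSet s → μ s = 0 → μ (ψ c ⁻¹' s) = 0)
    -- the 1-semi-additive functional `g`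
    (g : ℝ → X → ℝ)
    (hg_meas : Measurable (fun p : ℝ × X => g p.1 p.2))
    (hg : ∀ c1 c2 : ℝ, 0 < c1 → 0 < c2 → ∀ x : X,
      g (c1 * c2) x = g c1 x / c2 + g c2 (ψ c1 x))
    -- the cocycle `b̃` with values in `ℝ∖{0}`
    (btil : ℝ → X → ℝ)
    (hbtil_meas : Measurable (fun p : ℝ × X => btil p.1 p.2))
    (hbtil_ne : ∀ c : ℝ, 0 < c → ∀ x : X, btil c x ≠ 0)
    (hbtil : ∀ c1 c2 : ℝ, 0 < c1 → 0 < c2 → ∀ x : X,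
      btil (c1 * c2) x = btil c1 x * btil c2 (ψ c1 x))
    (G : X × ℝ → ℝ)
    (hG_meas : Measurable G)
    (j : ℝ → X → ℝ)
    (hj : ∀ c : ℝ, 0 < c → ∀ᵐ p ∂(μ.prod (volume : Measure ℝ)),
      j c p.1 = c ^ (-(H - 1 / α)) * G (p.1, c * p.2) -
        btil c p.1 * G (ψ c p.1, p.2 + g c p.1)) :
    ∀ c1 c2 : ℝ, 0 < c1 → 0 < c2 → ∀ᵐ x ∂μ,
      j (c1 * c2) x = c2 ^ (-(H - 1 / α)) * j c1 x + btil c1 x * j c2 (ψ c1 x) := by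
  intro c1 c2 hc1 hc2
  set π : Measure (X × ℝ) := μ.prod (volume : Measure ℝ) with hπ
  -- measurability of the sections
  have hψ1 : Measurable (ψ c1) := hψ_meas.comp (measurable_const.prodMk measurable_id)
  have hg1 : Measurable (g c1) := hg_meas.comp (measurable_const.prodMk measurable_id)
  -- transfer map T1 : (x,u) ↦ (x, c2 * u)
  have hT1 : ∀ s : Set (X × ℝ), MeasurableSet s → π s = 0 →
      π ((fun p : X × ℝ => (p.1, c2 * p.2)) ⁻¹' s) = 0 := by
    intro s hs hs0
    have hTm : Measurable (fun p : X × ℝ => (p.1, c2 * p.2)) :=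
      measurable_fst.prodMk (measurable_snd.const_mul c2)
    rw [hπ, Measure.prod_apply (hTm hs)]
    have hslice : ∀ᵐ x ∂μ, (volume : Measure ℝ) (Prod.mk x ⁻¹' s) = 0 := by
      rw [hπ, Measure.prod_apply hs] at hs0
      exact (lintegral_eq_zero_iff (measurable_measure_prodMk_left hs)).1 hs0
    have : ∀ᵐ x ∂μ,
        (volume : Measure ℝ) (Prod.mk x ⁻¹' ((fun p : X × ℝ => (p.1, c2 * p.2)) ⁻¹' s)) = 0 := by
      filter_upwards [hslice] with x hx
      have : Prod.mk x ⁻¹' ((fun p : X × ℝ => (p.1, c2 * p.2)) ⁻¹' s)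
          = (fun u : ℝ => c2 * u) ⁻¹' (Prod.mk x ⁻¹' s) := rfl
      rw [this, Real.volume_preimage_mul_left (ne_of_gt hc2), hx, mul_zero]
    exact (lintegral_congr_ae (by filter_upwards [this] with x hx using hx)).trans
      lintegral_zero
  -- transfer map T2 : (x,u) ↦ (ψ c1 x, u + g c1 x / c2)
  have hT2 : ∀ s : Set (X × ℝ), MeasurableSet s → π s = 0 →
      π ((fun p : X × ℝ => (ψ c1 p.1, p.2 + g c1 p.1 / c2)) ⁻¹' s) = 0 := by
    intro s hs hs0
    have hTm : Measurable (fun p : X × ℝ => (ψ c1 p.1, p.2 + g c1 p.1 / c2)) :=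
      (hψ1.comp measurable_fst).prodMk
        (measurable_snd.add ((hg1.comp measurable_fst).div_const c2))
    rw [hπ, Measure.prod_apply (hTm hs)]
    have hFmeas : Measurable fun y => (volume : Measure ℝ) (Prod.mk y ⁻¹' s) :=
      measurable_measure_prodMk_left hs
    have hslice : μ {y | (volume : Measure ℝ) (Prod.mk y ⁻¹' s) ≠ 0} = 0 := by
      rw [hπ, Measure.prod_apply hs] at hs0
      have := (lintegral_eq_zero_iff hFmeas).1 hs0
      rw [Filter.EventuallyEq, ae_iff] at this
      simpa using this
    have hpre : μ (ψ c1 ⁻¹' {y | (volume : Measure ℝ) (Prod.mk y ⁻¹' s) ≠ 0}) = 0 :=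
      hψ_ns c1 hc1 _ (hFmeas (measurableSet_singleton 0).compl) hslice
    have key : ∀ᵐ x ∂μ,
        (volume : Measure ℝ)
          (Prod.mk x ⁻¹' ((fun p : X × ℝ => (ψ c1 p.1, p.2 + g c1 p.1 / c2)) ⁻¹' s)) = 0 := by
      rw [ae_iff]
      refine measure_mono_null ?_ hpre
      intro x hx
      simp only [Set.mem_setOf_eq] at hx ⊢
      intro h0
      apply hx
      have : Prod.mk x ⁻¹' ((fun p : X × ℝ => (ψ c1 p.1, p.2 + g c1 p.1 / c2)) ⁻¹' s)
          = (fun u : ℝ => u + g c1 x / c2) ⁻¹' (Prod.mk (ψ c1 x) ⁻¹' s) := rfl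
      rw [this, measure_preimage_add_right] at *
      exact h0 ▸ rfl
    exact (lintegral_congr_ae key).trans lintegral_zero
  -- gather the three a.e. identities
  have E0 := hj (c1 * c2) (mul_pos hc1 hc2)
  have E1 := transfer_ae π _ hT1 (hj c1 hc1)
  have E2 := transfer_ae π _ hT2 (hj c2 hc2)
  have Eall : ∀ᵐ p ∂π, j (c1 * c2) p.1
      = c2 ^ (-(H - 1 / α)) * j c1 p.1 + btil c1 p.1 * j c2 (ψ c1 p.1) := by
    filter_upwards [E0, E1, E2] with p h0 h1 h2
    obtain ⟨x, u⟩ := p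
    simp only at h0 h1 h2 ⊢
    have hψ12 : ψ (c1 * c2) x = ψ c2 (ψ c1 x) := by
      rw [mul_comm]; exact hψ_mul c2 c1 hc2 hc1 x
    have hb12 := hbtil c1 c2 hc1 hc2 x
    have hg12 := hg c1 c2 hc1 hc2 x
    have hrpow : (c1 * c2) ^ (-(H - 1 / α))
        = c1 ^ (-(H - 1 / α)) * c2 ^ (-(H - 1 / α)) :=
      Real.mul_rpow hc1.le hc2.le
    have harg : c2 * (u + g c1 x / c2) = c2 * u + g c1 x := by
      rw [mul_add, mul_div_cancel₀ _ (ne_of_gt hc2)]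
    have harg2 : u + g c1 x / c2 + g c2 (ψ c1 x) = u + g (c1 * c2) x := by
      rw [hg12]; ring
    have hmu : c1 * c2 * u = c1 * (c2 * u) := by ring
    rw [hψ12, hb12, hrpow, hmu, hg12] at h0
    rw [harg] at h2
    have harg2' : u + g c1 x / c2 + g c2 (ψ c1 x) = u + (g c1 x / c2 + g c2 (ψ c1 x)) := by ring
    rw [harg2'] at h2
    rw [h0, h1, h2]
    ring
  have := Measure.ae_ae_of_ae_prod Eall
  filter_upwards [this] with x hx
  have hvol : (volume : Measure ℝ) ≠ 0 := by
    intro h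
    have := congrArg (fun m : Measure ℝ => m (Set.Icc (0:ℝ) 1)) h
    simp [Real.volume_Icc] at this
  haveI : NeZero (volume : Measure ℝ) := ⟨hvol⟩
  obtain ⟨u, hu⟩ := hx.exists
  exact hu
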